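/- For every real number c with 0 < c ≤ 1, f(1,c) = 1. -/

import Mathlib

open Filter Finset Polynomial

/-! ### Auxiliary: iterated forward differences kill low-degree polynomials -/

lemma fwdDiff_poly_eval (p : Polynomial ℝ) :
    fwdDiff (1:ℝ) (fun x ↦ p.eval x) = fun x ↦ (p.comp (X + C 1) - p).eval x := by
  funext x
  simp [fwdDiff, Polynomial.eval_comp]

lemma degree_comp_sub_lt (p : Polynomial ℝ) (hp : p ≠ 0) :
    (p.comp (X + C 1) - p).degree < p.degree := by
  have hlc : (p.comp (X + C 1)).leadingCoeff = p.leadingCoeff := by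
    rw [Polynomial.leadingCoeff_comp (by rw [Polynomial.natDegree_X_add_C]; norm_num)]
    rw [Polynomial.leadingCoeff_X_add_C, one_pow, mul_one]
  have hq0 : p.comp (X + C 1) ≠ 0 :=
    Polynomial.leadingCoeff_ne_zero.mp (hlc ▸ Polynomial.leadingCoeff_ne_zero.mpr hp)
  have hdeg : (p.comp (X + C 1)).degree = p.degree := by
    rw [Polynomial.degree_eq_natDegree hq0, Polynomial.degree_eq_natDegree hp,
      Polynomial.natDegree_comp, Polynomial.natDegree_X_add_C, mul_one]
  calc (p.comp (X + C 1) - p).degree < (p.comp (X + C 1)).degree :=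
        Polynomial.degree_sub_lt hdeg hq0 hlc
    _ = p.degree := hdeg

lemma fwdDiff_iter_poly_eval (n : ℕ) (p : Polynomial ℝ) (h : p.degree < n) :
    (fwdDiff (1:ℝ))^[n] (fun x ↦ p.eval x) = 0 := by
  induction n generalizing p with
  | zero =>
    have hb : p.degree < 0 := by simpa using h
    have : p = 0 := Polynomial.degree_eq_bot.mp (Nat.WithBot.lt_zero_iff.mp hb)
    simp only [this, Polynomial.eval_zero, Function.iterate_zero, id]
    rfl
  | succ n ih =>
    rw [Function.iterate_succ_apply, fwdDiff_poly_eval]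
    apply ih
    rcases le_or_gt p.degree 0 with h0 | h0
    · rw [Polynomial.eq_C_of_degree_le_zero h0]
      simp only [Polynomial.C_comp, sub_self, Polynomial.degree_zero]
      exact WithBot.bot_lt_coe n
    · have hp : p ≠ 0 := fun hh ↦ by simp [hh] at h0
      have hlt := degree_comp_sub_lt p hp
      have hle : p.degree ≤ (n : WithBot ℕ) := by
        rw [Polynomial.degree_eq_natDegree hp] at h ⊢
        have : p.natDegree < n + 1 := by exact_mod_cast h
        exact_mod_cast Nat.lt_succ_iff.mp this
      exact lt_of_lt_of_le hlt hle

lemma alt_sum_pow_eq_zero (n : ℕ) (hn : 0 < n) :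
    ∑ k ∈ Finset.range (n+1), (-1:ℝ)^(n-k) * (n.choose k) * ((k:ℝ)+1)^(n-1) = 0 := by
  have hdeg : ((X + C 1 : Polynomial ℝ)^(n-1)).degree < n := by
    rw [Polynomial.degree_pow, Polynomial.degree_X_add_C]
    simp only [nsmul_eq_mul, mul_one]
    exact_mod_cast Nat.sub_lt hn one_pos
  have h0 := congrFun (fwdDiff_iter_poly_eval n ((X + C 1 : Polynomial ℝ)^(n-1)) hdeg) 0
  rw [fwdDiff_iter_eq_sum_shift] at h0
  simp only [Pi.zero_apply] at h0
  rw [← h0]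
  apply Finset.sum_congr rfl
  intro k hk
  rw [zsmul_eq_mul]
  push_cast
  ring_nf
  simp [Polynomial.eval_pow]
  ring

/-! ### The Borel coefficients and their power series -/

noncomputable def bc (k : ℕ) : ℝ := ((k:ℝ)+1)^(k-1) / (Nat.factorial k)

lemma bc_pos (k : ℕ) : 0 < bc k := by
  apply div_pos (pow_pos (by positivity) _)
  exact_mod_cast k.factorial_pos

lemma pow_pred_mul (n : ℕ) : ((n:ℝ)+1)^(n-1) * ((n:ℝ)+1) = ((n:ℝ)+1)^n := by
  cases n with
  | zero => norm_num
  | succ m => rw [← pow_succ]; norm_num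

lemma bc_ratio (n : ℕ) : bc (n+1) / bc n = (((n:ℝ)+2)/((n:ℝ)+1))^n := by
  have h1 : ((n:ℝ)+1) ≠ 0 := by positivity
  have h2 : (Nat.factorial n : ℝ) ≠ 0 := by exact_mod_cast n.factorial_ne_zero
  rw [div_eq_iff (ne_of_gt (bc_pos n))]
  unfold bc
  rw [div_pow]
  push_cast [Nat.factorial_succ]
  rw [show ((n:ℝ)+1+1) = (n:ℝ)+2 by ring]
  rw [div_mul_div_comm, div_eq_div_iff (by positivity) (by positivity)]
  have h3 := pow_pred_mul n
  linear_combination (-(((n:ℝ)+2)^n * (Nat.factorial n : ℝ))) * h3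

lemma bc_ratio_tendsto : Tendsto (fun n : ℕ ↦ bc (n+1) / bc n) atTop (nhds (Real.exp 1)) := by
  simp only [bc_ratio]
  have h1 : Tendsto (fun n : ℕ ↦ (1 + 1/((n:ℝ)+1))^(n+1)) atTop (nhds (Real.exp 1)) := by
    have h := (Real.tendsto_one_add_div_pow_exp 1).comp (tendsto_add_atTop_nat 1)
    refine h.congr (fun n ↦ ?_)
    push_cast [Function.comp]
    norm_num
  have h2 : Tendsto (fun n : ℕ ↦ (1 + 1/((n:ℝ)+1))) atTop (nhds 1) := by
    have h0 : Tendsto (fun n : ℕ ↦ 1/((n:ℝ)+1)) atTop (nhds 0) :=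
      tendsto_one_div_add_atTop_nhds_zero_nat
    simpa using (tendsto_const_nhds (x := (1:ℝ))).add h0
  have h3 : Tendsto (fun n : ℕ ↦ (1 + 1/((n:ℝ)+1))^(n+1) / (1 + 1/((n:ℝ)+1))) atTop
      (nhds (Real.exp 1)) := by
    simpa [Pi.div_def] using h1.div h2 one_ne_zero
  refine h3.congr (fun n ↦ ?_)
  have h1 : ((n:ℝ)+1) ≠ 0 := by positivity
  rw [pow_succ, mul_div_assoc, div_self (by positivity), mul_one]
  congr 1
  field_simp
  ring

noncomputable def P : FormalMultilinearSeries ℝ ℝ ℝ := FormalMultilinearSeries.ofScalars ℝ bc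

lemma exp_one_toNNReal_ne : (Real.exp 1).toNNReal ≠ 0 := by
  simp [Real.toNNReal_eq_zero, Real.exp_pos, not_le]

lemma P_radius : P.radius ≥ ENNReal.ofNNReal ((Real.exp 1).toNNReal)⁻¹ := by
  apply FormalMultilinearSeries.inv_le_ofScalars_radius_of_tendsto ℝ bc exp_one_toNNReal_ne
  have h : (fun n : ℕ ↦ ‖bc n.succ‖ / ‖bc n‖) = fun n ↦ bc (n+1) / bc n := by
    funext n
    rw [Real.norm_eq_abs, Real.norm_eq_abs, abs_of_pos (bc_pos _), abs_of_pos (bc_pos _)]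
  rw [h, Real.coe_toNNReal _ (Real.exp_pos 1).le]
  exact bc_ratio_tendsto

lemma P_radius_pos : 0 < P.radius :=
  lt_of_lt_of_le (ENNReal.coe_pos.mpr (pos_iff_ne_zero.mpr (inv_ne_zero exp_one_toNNReal_ne)))
    P_radius

lemma bc_abs_summable {x : ℝ} (hx : |x| < (Real.exp 1)⁻¹) :
    Summable (fun k ↦ bc k * |x|^k) := by
  have h1 : (‖x‖₊ : ENNReal) < P.radius := by
    refine lt_of_lt_of_le ?_ P_radius
    rw [ENNReal.coe_lt_coe]
    rw [← NNReal.coe_lt_coe, coe_nnnorm, Real.norm_eq_abs, NNReal.coe_inv,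
      Real.coe_toNNReal _ (Real.exp_pos 1).le]
    exact hx
  have h2 := P.summable_norm_mul_pow h1
  refine h2.congr (fun n ↦ ?_)
  simp only [P, FormalMultilinearSeries.ofScalars_norm, Real.norm_eq_abs,
    abs_of_pos (bc_pos n), coe_nnnorm, Real.norm_eq_abs]

lemma bc_summable {x : ℝ} (hx : |x| < (Real.exp 1)⁻¹) :
    Summable (fun k ↦ bc k * x^k) := by
  apply Summable.of_abs
  refine (bc_abs_summable hx).congr (fun n ↦ ?_) |>.congr (fun n ↦ rfl)
  rw [abs_mul, abs_of_pos (bc_pos n), abs_pow]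

lemma real_exp_tsum (x : ℝ) : Real.exp x = ∑' n, x^n / n.factorial := by
  rw [Real.exp_eq_exp_ℝ, NormedSpace.exp_eq_tsum_div]

/-! ### The double series for small `c` -/

noncomputable def F (c : ℝ) (p : ℕ × ℕ) : ℝ :=
  (((p.1:ℝ)+1)^(p.1-1) * c^p.1 / (Nat.factorial p.1)) *
    ((-(c*((p.1:ℝ)+1)))^p.2 / (Nat.factorial p.2))

lemma F_abs {c : ℝ} (p : ℕ × ℕ) (hc0 : 0 < c) : |F c p| =
    (((p.1:ℝ)+1)^(p.1-1) * c^p.1 / (Nat.factorial p.1)) *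
      ((c*((p.1:ℝ)+1))^p.2 / (Nat.factorial p.2)) := by
  unfold F
  rw [abs_mul, abs_div, abs_div, abs_mul, abs_pow, abs_pow, abs_pow, abs_neg]
  rw [abs_of_pos hc0, abs_of_pos (show (0:ℝ) < (p.1:ℝ)+1 by positivity),
    abs_of_nonneg (show (0:ℝ) ≤ (Nat.factorial p.1 : ℝ) by positivity),
    abs_of_nonneg (show (0:ℝ) ≤ (Nat.factorial p.2 : ℝ) by positivity),
    abs_mul, abs_of_pos hc0, abs_of_pos (show (0:ℝ) < (p.1:ℝ)+1 by positivity)]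

lemma ce_small {c : ℝ} (hc0 : 0 < c) (hc : c < 1/8) : |c * Real.exp c| < (Real.exp 1)⁻¹ := by
  rw [abs_of_pos (by positivity), inv_eq_one_div, lt_div_iff₀ (Real.exp_pos 1)]
  have h2 : Real.exp (c+1) < 8 := by
    have e1 := Real.exp_one_lt_d9
    have e0 := Real.exp_pos 1
    have h3 : Real.exp (c+1) < Real.exp 2 := Real.exp_lt_exp.mpr (by linarith)
    have h4 : Real.exp 2 = Real.exp 1 * Real.exp 1 := by
      rw [← Real.exp_add]; norm_num
    nlinarith
  have h5 : c * Real.exp c * Real.exp 1 = c * Real.exp (c+1) := by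
    rw [Real.exp_add]; ring
  rw [h5]
  nlinarith [Real.exp_pos (c+1)]

lemma F_row_summable {c : ℝ} (k : ℕ) : Summable (fun j ↦ F c (k, j)) := by
  have h := (Real.summable_pow_div_factorial (-(c*((k:ℝ)+1)))).mul_left
    (((k:ℝ)+1)^(k-1) * c^k / (Nat.factorial k))
  exact h.congr (fun j ↦ rfl)

lemma F_abs_row_tsum {c : ℝ} (hc0 : 0 < c) (k : ℕ) : ∑' j, |F c (k, j)| =
    Real.exp c * (bc k * (c * Real.exp c)^k) := by
  calc ∑' j, |F c (k, j)|
      = ((k:ℝ)+1)^(k-1) * c^k / (Nat.factorial k) *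
          ∑' j, (c*((k:ℝ)+1))^j / (Nat.factorial j) := by
        rw [← tsum_mul_left]
        exact tsum_congr fun j ↦ F_abs (k, j) hc0
    _ = ((k:ℝ)+1)^(k-1) * c^k / (Nat.factorial k) * Real.exp (c*((k:ℝ)+1)) := by
        rw [real_exp_tsum]
    _ = Real.exp c * (bc k * (c * Real.exp c)^k) := by
        rw [mul_pow, bc]
        rw [show c*((k:ℝ)+1) = (k:ℝ)*c + c by ring, Real.exp_add, Real.exp_nat_mul]
        ring

lemma F_summable {c : ℝ} (hc0 : 0 < c) (hc : c < 1/8) : Summable (F c) := by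
  apply Summable.of_abs
  rw [summable_prod_of_nonneg (fun p ↦ abs_nonneg _)]
  constructor
  · intro k
    exact (F_row_summable k).abs
  · apply Summable.congr _ (fun k ↦ (F_abs_row_tsum hc0 k).symm)
    exact ((bc_summable (ce_small hc0 hc)).mul_left (Real.exp c)).congr (fun k ↦ rfl)

lemma F_row_tsum {c : ℝ} (k : ℕ) : ∑' j, F c (k, j) =
    bc k * (c * Real.exp (-c))^k * Real.exp (-c) := by
  calc ∑' j, F c (k, j)
      = ((k:ℝ)+1)^(k-1) * c^k / (Nat.factorial k) *
          ∑' j, (-(c*((k:ℝ)+1)))^j / (Nat.factorial j) := by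
        rw [← tsum_mul_left]
        exact tsum_congr fun j ↦ rfl
    _ = ((k:ℝ)+1)^(k-1) * c^k / (Nat.factorial k) * Real.exp (-(c*((k:ℝ)+1))) := by
        rw [real_exp_tsum]
    _ = bc k * (c * Real.exp (-c))^k * Real.exp (-c) := by
        rw [mul_pow, bc]
        rw [show -(c*((k:ℝ)+1)) = (k:ℝ)*(-c) + (-c) by ring, Real.exp_add, Real.exp_nat_mul]
        ring

lemma F_antidiagonal_sum {c : ℝ} (hc0 : 0 < c) (n : ℕ) :
    ∑ kl ∈ Finset.HasAntidiagonal.antidiagonal n, F c kl = if n = 0 then 1 else 0 := by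
  rcases Nat.eq_zero_or_pos n with rfl | hn
  · simp [F]
  · rw [if_neg hn.ne']
    rw [Finset.Nat.sum_antidiagonal_eq_sum_range_succ_mk]
    have key : ∀ k ∈ Finset.range (n+1), F c (k, n - k) =
        c^n / (Nat.factorial n) * ((-1:ℝ)^(n-k) * (n.choose k) * ((k:ℝ)+1)^(n-1)) := by
      intro k hk
      have hkn : k ≤ n := Nat.lt_succ_iff.mp (Finset.mem_range.mp hk)
      unfold F
      simp only
      rw [neg_pow, mul_pow]
      have hcc : c^k * c^(n-k) = c^n := by
        rw [← pow_add, Nat.add_sub_cancel' hkn]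
      have hpow : ((k:ℝ)+1)^(k-1) * ((k:ℝ)+1)^(n-k) = ((k:ℝ)+1)^(n-1) := by
        rcases Nat.eq_zero_or_pos k with rfl | hk0
        · norm_num
        · rw [← pow_add]
          congr 1
          omega
      have hchoose : (n.choose k : ℝ) * (Nat.factorial k) * (Nat.factorial (n-k)) =
          (Nat.factorial n : ℝ) := by
        exact_mod_cast congrArg Nat.cast (Nat.choose_mul_factorial_mul_factorial hkn)
      field_simp
      rw [show ((k:ℝ)+1)^(k-1) * c^k * c^(n-k) * ((k:ℝ)+1)^(n-k) *
            (Nat.factorial n : ℝ)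
          = (Nat.factorial n : ℝ) * (c^k*c^(n-k)) *
            (((k:ℝ)+1)^(k-1)*((k:ℝ)+1)^(n-k)) by ring,
        hcc, hpow, ← hchoose]
      ring
    rw [Finset.sum_congr rfl key, ← Finset.mul_sum, alt_sum_pow_eq_zero n hn, mul_zero]

lemma small_c_eq_one {c : ℝ} (hc0 : 0 < c) (hc : c < 1/8) :
    ∑' k, bc k * (c * Real.exp (-c))^k * Real.exp (-c) = 1 := by
  have hsum := F_summable hc0 hc
  have hrows : ∀ k, Summable (fun j ↦ F c (k, j)) := fun k ↦ F_row_summable k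
  have h1 : ∑' p : ℕ × ℕ, F c p = ∑' k, bc k * (c * Real.exp (-c))^k * Real.exp (-c) := by
    rw [Summable.tsum_prod' hsum hrows]
    exact tsum_congr fun k ↦ F_row_tsum k
  have h2 : ∑' p : ℕ × ℕ, F c p = 1 := by
    have hs : Summable (fun x : (Σ n : ℕ, {x // x ∈ Finset.HasAntidiagonal.antidiagonal n}) ↦
        F c (Finset.HasAntidiagonal.sigmaAntidiagonalEquivProd x)) :=
      (Finset.HasAntidiagonal.sigmaAntidiagonalEquivProd.summable_iff.mpr hsum).congr (fun _ ↦ rfl)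
    calc ∑' p : ℕ × ℕ, F c p
        = ∑' x : (Σ n : ℕ, {x // x ∈ Finset.HasAntidiagonal.antidiagonal n}),
            F c (Finset.HasAntidiagonal.sigmaAntidiagonalEquivProd x) :=
          (Finset.HasAntidiagonal.sigmaAntidiagonalEquivProd.tsum_eq (F c)).symm
      _ = ∑' (n : ℕ) (kl : {x // x ∈ Finset.HasAntidiagonal.antidiagonal n}),
            F c (Finset.HasAntidiagonal.sigmaAntidiagonalEquivProd ⟨n, kl⟩) :=
          Summable.tsum_sigma' (fun n ↦ (hasSum_fintype _).summable) hs
      _ = ∑' (n : ℕ), (if n = 0 then (1:ℝ) else 0) := by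
          apply tsum_congr
          intro n
          rw [tsum_fintype, ← F_antidiagonal_sum hc0 n]
          exact Finset.sum_coe_sort (Finset.HasAntidiagonal.antidiagonal n) (F c)
      _ = 1 := tsum_ite_eq 0 1
  rw [← h1, h2]

/-! ### Stirling bound and summability of the majorant -/

lemma factorial_lower (k : ℕ) (hk : 1 ≤ k) :
    Real.sqrt (2*k) * ((k:ℝ)/Real.exp 1)^k ≤ (Nat.factorial k : ℝ) := by
  have h1 : Real.sqrt Real.pi ≤ Stirling.stirlingSeq k := by
    obtain ⟨m, rfl⟩ := Nat.exists_eq_add_of_le hk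
    have h := Stirling.stirlingSeq'_antitone.le_of_tendsto
      (Stirling.tendsto_stirlingSeq_sqrt_pi.comp (tendsto_add_atTop_nat 1)) m
    simpa [Function.comp, Nat.succ_eq_add_one, add_comm] using h
  have h2 : (1:ℝ) ≤ Stirling.stirlingSeq k := by
    refine le_trans ?_ h1
    rw [show (1:ℝ) = Real.sqrt 1 by simp]
    exact Real.sqrt_le_sqrt (by linarith [Real.pi_gt_three])
  have h3 : 0 < Real.sqrt (2*k) * ((k:ℝ)/Real.exp 1)^k := by
    have : (0:ℝ) < k := by exact_mod_cast hk
    positivity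
  unfold Stirling.stirlingSeq at h2
  rw [le_div_iff₀ h3] at h2
  linarith

lemma one_add_inv_pow_le (k : ℕ) (hk : 1 ≤ k) : ((k:ℝ)+1)^k ≤ Real.exp 1 * (k:ℝ)^k := by
  have hk0 : (0:ℝ) < k := by exact_mod_cast hk
  have h1 : ((k:ℝ)+1) = (k:ℝ) * (1 + 1/k) := by field_simp
  have h2 : (1 + 1/(k:ℝ)) ≤ Real.exp (1/k) := by
    have := Real.add_one_le_exp (1/(k:ℝ)); linarith
  have h3 : (1 + 1/(k:ℝ))^k ≤ Real.exp (1/k)^k := pow_le_pow_left₀ (by positivity) h2 k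
  have h4 : Real.exp (1/(k:ℝ))^k = Real.exp 1 := by
    rw [← Real.exp_nat_mul]
    congr 1
    field_simp
  rw [h1, mul_pow]
  rw [h4] at h3
  have := mul_le_mul_of_nonneg_left h3 (pow_nonneg hk0.le k)
  linarith

lemma bc_bound (m : ℕ) (hm : 1 ≤ m) :
    bc m * ((Real.exp 1)⁻¹)^m ≤ 3 * (((m:ℝ))^((3:ℝ)/2))⁻¹ := by
  have hm0 : (0:ℝ) < m := by exact_mod_cast hm
  set E := Real.exp 1 with hE
  have hE0 : 0 < E := Real.exp_pos 1
  have hE3 : E ≤ 3 := by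
    have := Real.exp_one_lt_d9; linarith
  set S := Real.sqrt (2*(m:ℝ)) with hS
  have hS0 : 0 < S := Real.sqrt_pos.mpr (by linarith)
  set P' := (m:ℝ)^m with hP
  have hP0 : 0 < P' := pow_pos hm0 m
  set Q := ((m:ℝ)+1)^(m-1) with hQ
  have hQ0 : 0 < Q := pow_pos (by linarith) _
  have hIm : (0:ℝ) < (E⁻¹)^m := pow_pos (by positivity) m
  have hfac : S * (P' * (E⁻¹)^m) ≤ (Nat.factorial m : ℝ) := by
    have h := factorial_lower m hm
    rw [div_pow, div_eq_mul_inv, ← inv_pow] at h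
    exact h
  have hq : Q * ((m:ℝ)+1) ≤ E * P' := by
    rw [hQ, pow_pred_mul m]
    exact one_add_inv_pow_le m hm
  have hrpow : ((m:ℝ))^((3:ℝ)/2) = Real.sqrt (m:ℝ) * (m:ℝ) := by
    rw [show (3:ℝ)/2 = 1 + 1/2 by norm_num, Real.rpow_add hm0, Real.rpow_one,
      Real.sqrt_eq_rpow]
    ring
  have step1 : bc m * (E⁻¹)^m ≤ Q * (E⁻¹)^m / (S * (P' * (E⁻¹)^m)) := by
    rw [bc]
    rw [div_mul_eq_mul_div]
    apply div_le_div_of_nonneg_left (by positivity) (by positivity) hfac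
  have step2 : Q * (E⁻¹)^m / (S * (P' * (E⁻¹)^m)) = Q / (S * P') := by
    rw [show S * (P' * (E⁻¹)^m) = (S * P') * (E⁻¹)^m by ring]
    rw [mul_comm Q ((E⁻¹)^m), mul_comm (S*P') ((E⁻¹)^m)]
    exact mul_div_mul_left Q (S*P') hIm.ne'
  have step3 : Q / (S * P') ≤ E / (S * ((m:ℝ)+1)) := by
    rw [div_le_div_iff₀ (by positivity) (by positivity)]
    calc Q * (S * ((m:ℝ)+1)) = S * (Q * ((m:ℝ)+1)) := by ring
      _ ≤ S * (E * P') := by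
          apply mul_le_mul_of_nonneg_left hq hS0.le
      _ = E * (S * P') := by ring
  have step4 : E / (S * ((m:ℝ)+1)) ≤ 3 / (Real.sqrt (m:ℝ) * (m:ℝ)) := by
    apply div_le_div₀ (by norm_num) hE3 (by positivity)
    have h1 : Real.sqrt (m:ℝ) ≤ S := by
      rw [hS]
      exact Real.sqrt_le_sqrt (by linarith)
    have h2 : (m:ℝ) ≤ (m:ℝ)+1 := by linarith
    exact mul_le_mul h1 h2 hm0.le hS0.le
  calc bc m * (E⁻¹)^m ≤ Q / (S * P') := step2 ▸ step1
    _ ≤ E / (S * ((m:ℝ)+1)) := step3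
    _ ≤ 3 / (Real.sqrt (m:ℝ) * (m:ℝ)) := step4
    _ = 3 * (((m:ℝ))^((3:ℝ)/2))⁻¹ := by rw [hrpow, div_eq_mul_inv]

lemma M_summable : Summable (fun k ↦ bc k * ((Real.exp 1)⁻¹)^k) := by
  rw [← summable_nat_add_iff 1]
  have hmaj : Summable (fun k : ℕ ↦ 3 * ((((k:ℝ)+1))^((3:ℝ)/2))⁻¹) := by
    have h0 := Real.summable_nat_rpow_inv.mpr (by norm_num : (1:ℝ) < 3/2)
    have h1 := ((summable_nat_add_iff 1).mpr h0).mul_left (3:ℝ)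
    exact h1.congr (fun n ↦ by push_cast; ring_nf)
  apply Summable.of_nonneg_of_le (fun k ↦ mul_nonneg (bc_pos _).le (by positivity))
    (fun k ↦ ?_) hmaj
  have h := bc_bound (k+1) (Nat.le_add_left 1 k)
  convert h using 3
  push_cast
  ring

/-! ### The function `T` and its properties -/

noncomputable def Tf (c : ℝ) : ℝ := ∑' k, bc k * (c * Real.exp (-c))^k * Real.exp (-c)

lemma Psum_eq (x : ℝ) : P.sum x = ∑' k, bc k * x^k := by
  apply tsum_congr
  intro n
  rw [P, FormalMultilinearSeries.ofScalars_apply_eq, smul_eq_mul]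

lemma Tf_eq (c : ℝ) : Tf c = Real.exp (-c) * P.sum (c * Real.exp (-c)) := by
  rw [Tf, Psum_eq, ← tsum_mul_left]
  exact tsum_congr fun k ↦ by ring

/-! ### `f 1 c = Tf c` -/

/-- `f m c = ∑_{k=0}^∞ (km+1)^{k-1} c^k e^{-c(km+1)/m} / (m^k k!)`, where the factor
`(km+1)^{k-1}` for `k = 0` is interpreted as `1` (here via `ℕ`-subtraction in the exponent,
which gives `(0·m+1)^0 = 1`). -/
noncomputable def f (m c : ℝ) : ℝ :=
  ∑' k : ℕ, ((k : ℝ) * m + 1) ^ (k - 1) * c ^ k *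
    Real.exp (-c * ((k : ℝ) * m + 1) / m) / (m ^ k * (Nat.factorial k : ℝ))

lemma f_one_eq_Tf (c : ℝ) : f 1 c = Tf c := by
  apply tsum_congr
  intro k
  have hf : (Nat.factorial k : ℝ) ≠ 0 := by positivity
  rw [bc, mul_pow]
  rw [show -c*((k:ℝ)*1+1)/1 = (k:ℝ)*(-c) + (-c) by ring, Real.exp_add, Real.exp_nat_mul]
  simp only [mul_one, one_pow, one_mul]
  field_simp

/-! ### Analyticity and identity theorem -/

lemma ce_lt_inv_e {c : ℝ} (hc0 : 0 < c) (hc1 : c < 1) : c * Real.exp (-c) < (Real.exp 1)⁻¹ := by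
  have h := Real.add_one_lt_exp (x := c - 1) (by intro h; apply absurd (by linarith : c = 1); linarith)
  have h2 : c < Real.exp (c-1) := by linarith
  have h3 : c * Real.exp (1-c) < Real.exp (c-1) * Real.exp (1-c) :=
    mul_lt_mul_of_pos_right h2 (Real.exp_pos _)
  rw [← Real.exp_add] at h3
  norm_num at h3
  rw [inv_eq_one_div, lt_div_iff₀ (Real.exp_pos 1)]
  calc c * Real.exp (-c) * Real.exp 1 = c * Real.exp (1-c) := by
        rw [mul_assoc, ← Real.exp_add]; ring_nf
    _ < 1 := h3

lemma S_analytic : AnalyticOnNhd ℝ (fun c ↦ Real.exp (-c) * P.sum (c * Real.exp (-c)))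
    (Set.Ioo (0:ℝ) 1) := by
  intro c hc
  have h1 : AnalyticAt ℝ (fun c : ℝ ↦ Real.exp (-c)) c := (analyticAt_id.neg).rexp
  have h2 : AnalyticAt ℝ (fun c : ℝ ↦ c * Real.exp (-c)) c := analyticAt_id.mul h1
  have h3 : AnalyticAt ℝ P.sum (c * Real.exp (-c)) := by
    apply (P.hasFPowerSeriesOnBall P_radius_pos).analyticAt_of_mem
    rw [EMetric.mem_ball, edist_nndist, nndist_zero_right]
    refine lt_of_lt_of_le ?_ P_radius
    rw [ENNReal.coe_lt_coe, ← NNReal.coe_lt_coe, coe_nnnorm, Real.norm_eq_abs, NNReal.coe_inv,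
      Real.coe_toNNReal _ (Real.exp_pos 1).le]
    rw [abs_of_pos (by have := Real.exp_pos (-c); nlinarith [hc.1])]
    exact ce_lt_inv_e hc.1 hc.2
  have h4 : AnalyticAt ℝ (P.sum ∘ fun c : ℝ ↦ c * Real.exp (-c)) c :=
    AnalyticAt.comp (g := P.sum) (f := fun c : ℝ ↦ c * Real.exp (-c)) h3 h2
  exact h1.mul h4

lemma S_eqOn : Set.EqOn (fun c ↦ Real.exp (-c) * P.sum (c * Real.exp (-c))) (fun _ ↦ 1)
    (Set.Ioo (0:ℝ) 1) := by
  apply S_analytic.eqOn_of_preconnected_of_eventuallyEq analyticOnNhd_const isPreconnected_Ioo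
    (z₀ := 1/16) (by norm_num)
  have hmem : Set.Ioo (0:ℝ) (1/8) ∈ nhds (1/16 : ℝ) :=
    isOpen_Ioo.mem_nhds (by norm_num)
  filter_upwards [hmem] with x hx
  rw [← Tf_eq, Tf]
  exact small_c_eq_one hx.1 hx.2

/-! ### Continuity up to `c = 1` -/

lemma ce_le_inv_e {c : ℝ} (hc0 : 0 ≤ c) : c * Real.exp (-c) ≤ (Real.exp 1)⁻¹ := by
  have h := Real.add_one_le_exp (c - 1)
  have h2 : c ≤ Real.exp (c-1) := by linarith
  have h3 : c * Real.exp (1-c) ≤ Real.exp (c-1) * Real.exp (1-c) :=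
    mul_le_mul_of_nonneg_right h2 (Real.exp_pos _).le
  rw [← Real.exp_add] at h3
  norm_num at h3
  rw [inv_eq_one_div, le_div_iff₀ (Real.exp_pos 1)]
  calc c * Real.exp (-c) * Real.exp 1 = c * Real.exp (1-c) := by
        rw [mul_assoc, ← Real.exp_add]; ring_nf
    _ ≤ 1 := h3

lemma Tf_contOn : ContinuousOn Tf (Set.Ici (0:ℝ)) := by
  apply continuousOn_tsum (u := fun k ↦ bc k * ((Real.exp 1)⁻¹)^k) ?_ M_summable
  · intro k c hc
    have hc0 : (0:ℝ) ≤ c := hc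
    have hy0 : 0 ≤ c * Real.exp (-c) := mul_nonneg hc0 (Real.exp_pos _).le
    have hy1 : c * Real.exp (-c) ≤ (Real.exp 1)⁻¹ := ce_le_inv_e hc0
    have he1 : Real.exp (-c) ≤ 1 := Real.exp_le_one_iff.mpr (by linarith)
    rw [Real.norm_eq_abs, abs_mul, abs_mul, abs_of_pos (bc_pos k), abs_pow,
      abs_of_nonneg hy0, abs_of_nonneg (Real.exp_pos (-c)).le]
    calc bc k * (c * Real.exp (-c))^k * Real.exp (-c)
        ≤ bc k * ((Real.exp 1)⁻¹)^k * 1 := by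
          apply mul_le_mul
          · exact mul_le_mul_of_nonneg_left (pow_le_pow_left₀ hy0 hy1 k) (bc_pos k).le
          · exact he1
          · exact (Real.exp_pos _).le
          · exact mul_nonneg (bc_pos k).le (by positivity)
      _ = bc k * ((Real.exp 1)⁻¹)^k := mul_one _
  · intro k
    apply Continuous.continuousOn
    continuity

/-! ### Main theorem -/

theorem f_one_eq_one (c : ℝ) (hc0 : 0 < c) (hc1 : c ≤ 1) : f 1 c = 1 := by
  rw [f_one_eq_Tf]
  rcases lt_or_eq_of_le hc1 with hlt | rfl
  · rw [Tf_eq]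
    exact S_eqOn ⟨hc0, hlt⟩
  · have hne : (nhdsWithin (1:ℝ) (Set.Ioo (0:ℝ) 1)).NeBot := by
      rw [← mem_closure_iff_nhdsWithin_neBot, closure_Ioo (by norm_num : (0:ℝ) ≠ 1)]
      constructor <;> norm_num
    have h1 : Tendsto Tf (nhdsWithin 1 (Set.Ioo (0:ℝ) 1)) (nhds (Tf 1)) := by
      have hcw : ContinuousWithinAt Tf (Set.Ici (0:ℝ)) 1 :=
        Tf_contOn.continuousWithinAt (by norm_num)
      exact hcw.mono_left (nhdsWithin_mono 1 (fun x hx ↦ hx.1.le))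
    have h2 : Tendsto Tf (nhdsWithin 1 (Set.Ioo (0:ℝ) 1)) (nhds 1) := by
      apply Filter.Tendsto.congr' _ tendsto_const_nhds
      filter_upwards [eventually_mem_nhdsWithin] with x hx
      have := S_eqOn hx
      simp only at this
      rw [Tf_eq]
      exact this.symm
    exact tendsto_nhds_unique h1 h2
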